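/- Let μ be a probability measure on (0,∞) whose Laplace transform L[μ] extends to a holomorphic function on the open ball B_R(0) ⊆ ℂ for some R > 0. Then ∫_0^∞ e^{−zx} dμ(x) is finite for all z ∈ ℂ with Re z ∈ (−R, 0), and this integral equals the holomorphic extension of L[μ] on B_R(0). -/

import Mathlib

open MeasureTheory Complex
open scoped NNReal ENNReal

lemma aux_bound {n : ℕ} {c x : ℝ} (hc : 0 < c) (hx : 0 ≤ x) :
    x ^ n * Real.exp (-(c * x)) ≤ n.factorial / c ^ n := by
  have h := Real.pow_div_factorial_le_exp (x := c * x) (mul_nonneg hc.le hx) n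
  rw [div_le_iff₀ (by positivity)] at h
  rw [Real.exp_neg, mul_comm, inv_mul_le_iff₀ (Real.exp_pos _)]
  rw [mul_pow] at h
  have hcn : (0:ℝ) < c ^ n := pow_pos hc n
  rw [mul_div_assoc', le_div_iff₀ hcn]
  linarith

lemma my_norm_int {n : ℕ} (z : ℂ) (x : ℝ) :
    ‖(x:ℂ) ^ n * Complex.exp (-(z * x))‖ = |x| ^ n * Real.exp (-(z.re * x)) := by
  rw [norm_mul, norm_pow, Complex.norm_real, Real.norm_eq_abs,
    Complex.norm_exp]
  congr 2
  simp [Complex.mul_re]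

variable {μ : Measure ℝ} [IsProbabilityMeasure μ]

lemma meas_int (n : ℕ) (z : ℂ) :
    AEStronglyMeasurable (fun x : ℝ => (x:ℂ) ^ n * Complex.exp (-(z * x))) μ := by
  apply Continuous.aestronglyMeasurable
  fun_prop

lemma integrable_M (hμ : ∀ᵐ x ∂μ, 0 < x) (n : ℕ) {z : ℂ} (hz : 0 < z.re) :
    Integrable (fun x : ℝ => (x:ℂ) ^ n * Complex.exp (-(z * x))) μ := by
  refine Integrable.mono' (integrable_const ((n.factorial : ℝ) / z.re ^ n)) (meas_int n z) ?_
  filter_upwards [hμ] with x hx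
  rw [my_norm_int, abs_of_pos hx]
  exact aux_bound hz hx.le

lemma hasDerivAt_M (hμ : ∀ᵐ x ∂μ, 0 < x) (n : ℕ) {z₀ : ℂ} (hz : 0 < z₀.re) :
    HasDerivAt (fun z => ∫ x : ℝ, (x:ℂ) ^ n * Complex.exp (-(z * x)) ∂μ)
      (-∫ x : ℝ, (x:ℂ) ^ (n + 1) * Complex.exp (-(z₀ * x)) ∂μ) z₀ := by
  set ε := z₀.re / 2 with hεdef
  have hε : 0 < ε := by positivity
  have hre : ∀ z ∈ Metric.ball z₀ ε, ε < z.re := by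
    intro z hz'
    have : |z.re - z₀.re| < ε := lt_of_le_of_lt (by rw [Complex.dist_eq]; exact Complex.abs_re_le_norm (z - z₀)) hz'
    have := abs_lt.1 this
    simp only [hεdef] at *
    linarith [this.1]
  have key := hasDerivAt_integral_of_dominated_loc_of_deriv_le (μ := μ) (x₀ := z₀)
    (F := fun z (x:ℝ) => (x:ℂ) ^ n * Complex.exp (-(z * x)))
    (F' := fun z (x:ℝ) => -((x:ℂ) ^ (n + 1) * Complex.exp (-(z * x))))
    (bound := fun _ => ((n+1).factorial : ℝ) / ε ^ (n + 1)) (Metric.ball_mem_nhds z₀ hε)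
    (Filter.Eventually.of_forall fun z => meas_int n z)
    (integrable_M hμ n hz) ((meas_int (n+1) z₀).neg) ?_ (integrable_const _) ?_
  · have := key.2
    rwa [integral_neg] at this
  · filter_upwards [hμ] with x hx z hz'
    rw [norm_neg, my_norm_int, abs_of_pos hx]
    calc x ^ (n+1) * Real.exp (-(z.re * x))
        ≤ x ^ (n+1) * Real.exp (-(ε * x)) := by
          apply mul_le_mul_of_nonneg_left _ (by positivity)
          apply Real.exp_le_exp.2
          nlinarith [(hre z hz')]
      _ ≤ _ := aux_bound hε hx.le
  · filter_upwards with x z _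
    have h1 : HasDerivAt (fun z : ℂ => -(z * x)) (-(x:ℂ)) z := by
      simpa using ((hasDerivAt_id z).mul_const ((x:ℂ))).fun_neg
    have h2 := (h1.cexp).const_mul ((x:ℂ) ^ n)
    exact h2.congr_deriv (by ring)

lemma exp_tsum (y : ℝ) : Real.exp y = ∑' n : ℕ, y ^ n / n.factorial := by
  rw [Real.exp_eq_exp_ℝ, NormedSpace.exp_eq_tsum_div]

lemma integrable_real_M (hμ : ∀ᵐ x ∂μ, 0 < x) (n : ℕ) {c : ℝ} (hc : 0 < c) :
    Integrable (fun x : ℝ => x ^ n * Real.exp (-(c * x))) μ := by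
  refine Integrable.mono' (integrable_const ((n.factorial : ℝ) / c ^ n))
    (Continuous.aestronglyMeasurable (by fun_prop)) ?_
  filter_upwards [hμ] with x hx
  rw [Real.norm_eq_abs, _root_.abs_of_nonneg (by positivity)]
  exact aux_bound hc hx.le

lemma iteratedDeriv_M (hμ : ∀ᵐ x ∂μ, 0 < x) (n : ℕ) :
    ∀ z : ℂ, 0 < z.re → iteratedDeriv n (fun w : ℂ => ∫ x : ℝ, Complex.exp (-(w * x)) ∂μ) z
      = (-1) ^ n * ∫ x : ℝ, (x:ℂ) ^ n * Complex.exp (-(z * x)) ∂μ := by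
  induction n with
  | zero =>
    intro z hz
    simp only [iteratedDeriv_zero, pow_zero, one_mul]
  | succ n ih =>
    intro z hz
    have hS : IsOpen {w : ℂ | 0 < w.re} := isOpen_lt continuous_const continuous_re
    have heq : (fun w => iteratedDeriv n (fun w : ℂ => ∫ x : ℝ, Complex.exp (-(w * x)) ∂μ) w)
        =ᶠ[nhds z] fun w => (-1) ^ n * ∫ x : ℝ, (x:ℂ) ^ n * Complex.exp (-(w * x)) ∂μ := by
      filter_upwards [hS.mem_nhds hz] with w hw using ih w hw
    rw [iteratedDeriv_succ, heq.deriv_eq, deriv_const_mul _ ((hasDerivAt_M hμ n hz).differentiableAt),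
      (hasDerivAt_M hμ n hz).deriv]
    ring

lemma freq {R : ℝ} (hR : 0 < R) {P : ℂ → Prop} (h : ∀ t : ℝ, t ∈ Set.Ioo 0 R → P t) :
    ∃ᶠ z in nhdsWithin ((R/2 : ℝ) : ℂ) {((R/2 : ℝ) : ℂ)}ᶜ, P z := by
  have hmap : Filter.Tendsto (fun t : ℝ => (t : ℂ)) (nhdsWithin (R/2) {(R/2 : ℝ)}ᶜ)
      (nhdsWithin ((R/2 : ℝ) : ℂ) {((R/2 : ℝ) : ℂ)}ᶜ) := by
    rw [tendsto_nhdsWithin_iff]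
    refine ⟨(Complex.continuous_ofReal.tendsto _).mono_left nhdsWithin_le_nhds, ?_⟩
    filter_upwards [self_mem_nhdsWithin] with t ht
    simp only [Set.mem_compl_iff, Set.mem_singleton_iff] at ht ⊢
    exact fun h' => ht (by exact_mod_cast h')
  apply hmap.frequently
  have hev : ∀ᶠ t in nhdsWithin (R/2 : ℝ) {(R/2 : ℝ)}ᶜ, t ∈ Set.Ioo 0 R :=
    eventually_nhdsWithin_of_eventually_nhds
      (Filter.eventually_of_mem (Ioo_mem_nhds (by linarith) (by linarith)) fun t ht => ht)
  exact ((hev.mono fun t ht => h t ht)).frequently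

lemma key_integrable (hμ : ∀ᵐ x ∂μ, 0 < x) {R : ℝ} (hR : 0 < R) {F : ℂ → ℂ}
    (hF : DifferentiableOn ℂ F (Metric.ball (0:ℂ) R))
    (hFH : Set.EqOn F (fun w : ℂ => ∫ x : ℝ, Complex.exp (-(w * x)) ∂μ)
      (Metric.ball (0:ℂ) R ∩ {w : ℂ | 0 < w.re}))
    {s : ℝ} (hs : s ∈ Set.Ioo 0 R) :
    Integrable (fun x : ℝ => Real.exp (s * x)) μ := by
  obtain ⟨hs0, hsR⟩ := hs
  have hRs : 0 < R - s := by linarith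
  set t0 : ℝ := (R - s) / 4 with ht0def
  have ht0 : 0 < t0 := by positivity
  set r : ℝ := s + t0 with hrdef
  have hr0 : 0 < r := by positivity
  set ρ : ℝ := (s + R) / 2 with hρdef
  have hρ0 : 0 < ρ := by positivity
  have hrρ : r < ρ := by rw [hrdef, hρdef, ht0def]; linarith
  have hρRt : ρ + t0 < R := by rw [hρdef, ht0def]; linarith
  set c : ℂ := ((t0 : ℝ) : ℂ) with hcdef
  have hcre : (0:ℝ) < c.re := by simpa [hcdef] using ht0
  have hρcoe : (ρ.toNNReal : ℝ) = ρ := Real.coe_toNNReal _ hρ0.le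
  have hsub : Metric.closedBall c ρ.toNNReal ⊆ Metric.ball (0:ℂ) R := by
    intro w hw
    rw [Metric.mem_closedBall, hρcoe] at hw
    rw [Metric.mem_ball]
    have h1 : dist w 0 ≤ dist w c + dist c 0 := dist_triangle _ _ _
    have h2 : dist c 0 = t0 := by
      rw [hcdef, Complex.dist_eq, sub_zero, Complex.norm_real, Real.norm_eq_abs, _root_.abs_of_pos ht0]
    linarith
  have hρnn : (0:NNReal) < ρ.toNNReal := Real.toNNReal_pos.2 hρ0
  have hp := (hF.mono hsub).hasFPowerSeriesOnBall hρnn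
  set p := cauchyPowerSeries F c ρ.toNNReal with hpdef
  have hsum : Summable (fun n => ‖p n‖ * r ^ n) := by
    have hrlt : (r.toNNReal : ℝ≥0∞) < p.radius := by
      refine lt_of_lt_of_le ?_ hp.r_le
      rw [ENNReal.coe_lt_coe]
      exact_mod_cast (Real.toNNReal_lt_toNNReal_iff hρ0).2 hrρ
    have := p.summable_norm_mul_pow hrlt
    simpa [Real.coe_toNNReal _ hr0.le] using this
  set I : ℕ → ℝ := fun n => ∫ x : ℝ, x ^ n * Real.exp (-(t0 * x)) ∂μ with hIdef
  have hI0 : ∀ n, 0 ≤ I n := fun n =>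
    integral_nonneg_of_ae (hμ.mono fun x hx => by positivity)
  have hcS : c ∈ Metric.ball (0:ℂ) R ∩ {w : ℂ | 0 < w.re} := by
    constructor
    · simp only [Metric.mem_ball, Complex.dist_eq, sub_zero, hcdef, Complex.norm_real, Real.norm_eq_abs]
      rw [_root_.abs_of_pos ht0]; linarith
    · exact hcre
  have hnorm : ∀ n, ‖p n‖ = I n / n.factorial := by
    intro n
    have hA := hp.factorial_smul (1:ℂ) n
    rw [nsmul_eq_mul] at hA
    have hC : iteratedDeriv n F c
        = iteratedDeriv n (fun w : ℂ => ∫ x : ℝ, Complex.exp (-(w * x)) ∂μ) c := by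
      apply Filter.EventuallyEq.iteratedDeriv_eq
      have hU : IsOpen (Metric.ball (0:ℂ) R ∩ {w : ℂ | 0 < w.re}) :=
        Metric.isOpen_ball.inter (isOpen_lt continuous_const continuous_re)
      filter_upwards [hU.mem_nhds hcS] with w hw using hFH hw
    have hE : (∫ x : ℝ, (x:ℂ) ^ n * Complex.exp (-(c * x)) ∂μ) = ((I n : ℝ) : ℂ) := by
      have h' : (∫ x : ℝ, ((x ^ n * Real.exp (-(t0 * x)) : ℝ) : ℂ) ∂μ) = ((I n : ℝ) : ℂ) :=
        integral_ofReal
      rw [← h']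
      refine integral_congr_ae (Filter.Eventually.of_forall fun x => ?_)
      push_cast [Complex.ofReal_exp]
      norm_num [hcdef]
    have hcoeff : (n.factorial : ℂ) * p.coeff n = (-1)^n * ((I n : ℝ) : ℂ) := by
      calc (n.factorial : ℂ) * p.coeff n = iteratedFDeriv ℂ n F c (fun _ => 1) := hA
        _ = iteratedDeriv n F c := (iteratedDeriv_eq_iteratedFDeriv).symm
        _ = iteratedDeriv n (fun w : ℂ => ∫ x : ℝ, Complex.exp (-(w * x)) ∂μ) c := hC
        _ = (-1)^n * ∫ x : ℝ, (x:ℂ) ^ n * Complex.exp (-(c * x)) ∂μ :=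
            iteratedDeriv_M hμ n c hcre
        _ = (-1)^n * ((I n : ℝ) : ℂ) := by rw [hE]
    have h1 : (n.factorial : ℝ) * ‖p.coeff n‖ = I n := by
      have := congrArg norm hcoeff
      rw [norm_mul, norm_mul, norm_pow, norm_neg, norm_one, one_pow, one_mul,
        Complex.norm_natCast, Complex.norm_real, Real.norm_eq_abs,
        _root_.abs_of_nonneg (hI0 n)] at this
      exact this
    rw [p.norm_apply_eq_norm_coef, ← h1]
    field_simp
  have hsum2 : Summable (fun n => r ^ n / n.factorial * I n) := by
    refine hsum.congr fun n => ?_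
    rw [hnorm n]
    ring
  have hgint : ∀ n : ℕ, Integrable
      (fun x : ℝ => Real.exp (-(t0 * x)) * ((r * x) ^ n / n.factorial)) μ := by
    intro n
    refine ((integrable_real_M hμ n ht0).const_mul (r ^ n / n.factorial)).congr
      (Filter.Eventually.of_forall fun x => ?_)
    simp only [mul_pow]; ring
  have hgnonneg : ∀ n : ℕ, ∀ᵐ x ∂μ,
      0 ≤ Real.exp (-(t0 * x)) * ((r * x) ^ n / n.factorial) := by
    intro n
    filter_upwards [hμ] with x hx
    have h1 : (0:ℝ) ≤ r * x := mul_nonneg hr0.le hx.le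
    positivity
  have hgval : ∀ n : ℕ, (∫ x : ℝ, Real.exp (-(t0 * x)) * ((r * x) ^ n / n.factorial) ∂μ)
      = r ^ n / n.factorial * I n := by
    intro n
    rw [show (fun x : ℝ => Real.exp (-(t0 * x)) * ((r * x) ^ n / n.factorial))
        = fun x : ℝ => (r ^ n / n.factorial) * (x ^ n * Real.exp (-(t0 * x))) from
      funext fun x => by rw [mul_pow]; ring]
    exact integral_const_mul _ _
  have hfin : (∫⁻ x, ENNReal.ofReal (Real.exp (s * x)) ∂μ) < ⊤ := by
    have h1 : (∫⁻ x, ENNReal.ofReal (Real.exp (s * x)) ∂μ)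
        = ∫⁻ x, ∑' n : ℕ, ENNReal.ofReal
          (Real.exp (-(t0 * x)) * ((r * x) ^ n / n.factorial)) ∂μ := by
      refine lintegral_congr_ae ?_
      filter_upwards [hμ] with x hx
      have hsx : Real.exp (s * x)
          = ∑' n : ℕ, Real.exp (-(t0 * x)) * ((r * x) ^ n / n.factorial) := by
        rw [tsum_mul_left, ← exp_tsum (r * x), ← Real.exp_add]
        congr 1
        rw [hrdef]; ring
      rw [hsx, ENNReal.ofReal_tsum_of_nonneg]
      · intro n
        have h1 : (0:ℝ) ≤ r * x := mul_nonneg hr0.le hx.le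
        positivity
      · exact (Real.summable_pow_div_factorial (r * x)).mul_left _
    rw [h1, lintegral_tsum (f := fun (n : ℕ) (x : ℝ) => ENNReal.ofReal
      (Real.exp (-(t0 * x)) * ((r * x) ^ n / n.factorial)))
      (fun n => (Measurable.ennreal_ofReal (by fun_prop)).aemeasurable)]
    have h3 : ∀ n : ℕ, (∫⁻ x, ENNReal.ofReal
        (Real.exp (-(t0 * x)) * ((r * x) ^ n / n.factorial)) ∂μ)
        = ENNReal.ofReal (r ^ n / n.factorial * I n) := by
      intro n
      rw [← ofReal_integral_eq_lintegral_ofReal (hgint n) (hgnonneg n), hgval n]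
    calc (∑' n : ℕ, ∫⁻ x, ENNReal.ofReal
          (Real.exp (-(t0 * x)) * ((r * x) ^ n / n.factorial)) ∂μ)
        = ∑' n : ℕ, ENNReal.ofReal (r ^ n / n.factorial * I n) := tsum_congr h3
      _ = ENNReal.ofReal (∑' n : ℕ, r ^ n / n.factorial * I n) :=
          (ENNReal.ofReal_tsum_of_nonneg
            (fun n => mul_nonneg (by positivity) (hI0 n)) hsum2).symm
      _ < ⊤ := ENNReal.ofReal_lt_top
  refine ⟨Continuous.aestronglyMeasurable (by fun_prop), ?_⟩
  exact (hasFiniteIntegral_iff_ofReal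
    (Filter.Eventually.of_forall fun x => (Real.exp_pos _).le)).2 hfin

theorem statement3 (μ : Measure ℝ) [IsProbabilityMeasure μ] (hsupp : μ (Set.Ioi 0)ᶜ = 0)
    (R : ℝ) (hR : 0 < R) (F : ℂ → ℂ)
    (hF : DifferentiableOn ℂ F (Metric.ball (0:ℂ) R))
    (hext : ∀ t : ℝ, 0 ≤ t → t < R → F t = ∫ x, Complex.exp (-(t * x)) ∂μ) :
    (∀ z : ℂ, z.re ∈ Set.Ioo (-R) 0 →
      Integrable (fun x : ℝ => Complex.exp (-(z * x))) μ) ∧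
    (∀ z ∈ Metric.ball (0:ℂ) R, (∫ x, Complex.exp (-(z * x)) ∂μ) = F z) := by
  have hμpos : ∀ᵐ x ∂μ, 0 < x := by
    rw [ae_iff]
    convert hsupp using 2
    ext x; simp
  have hS : IsOpen {w : ℂ | 0 < w.re} := isOpen_lt continuous_const continuous_re
  set H : ℂ → ℂ := fun w => ∫ x : ℝ, Complex.exp (-(w * x)) ∂μ with hHdef
  have hHdiffS : DifferentiableOn ℂ H {w : ℂ | 0 < w.re} := by
    have hfun : H = fun z => ∫ x : ℝ, (x:ℂ) ^ 0 * Complex.exp (-(z * x)) ∂μ :=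
      funext fun w => by simp [hHdef]
    rw [hfun]
    exact fun z hz => ((hasDerivAt_M hμpos 0 hz).differentiableAt).differentiableWithinAt
  have hHan : AnalyticOnNhd ℂ H {w : ℂ | 0 < w.re} := hHdiffS.analyticOnNhd hS
  have hFan : AnalyticOnNhd ℂ F (Metric.ball 0 R) := hF.analyticOnNhd Metric.isOpen_ball
  have hballmem : ((R/2 : ℝ) : ℂ) ∈ Metric.ball (0:ℂ) R := by
    simp only [Metric.mem_ball, Complex.dist_eq, sub_zero, Complex.norm_real, Real.norm_eq_abs]
    rw [_root_.abs_of_pos (by linarith : (0:ℝ) < R/2)]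
    linarith
  have hcmem : ((R/2 : ℝ) : ℂ) ∈ Metric.ball (0:ℂ) R ∩ {w : ℂ | 0 < w.re} := by
    refine ⟨hballmem, ?_⟩
    simp only [Set.mem_setOf_eq, Complex.ofReal_re]
    linarith
  have hFH : Set.EqOn F H (Metric.ball (0:ℂ) R ∩ {w : ℂ | 0 < w.re}) := by
    refine AnalyticOnNhd.eqOn_of_preconnected_of_frequently_eq
      (hFan.mono Set.inter_subset_left) (hHan.mono Set.inter_subset_right)
      (((convex_ball (0:ℂ) R).inter (convex_halfSpace_re_gt 0)).isPreconnected)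
      hcmem (freq hR fun t ht => ?_)
    rw [hext t ht.1.le ht.2]
  have key : ∀ s : ℝ, s ∈ Set.Ioo 0 R → Integrable (fun x : ℝ => Real.exp (s * x)) μ :=
    fun s hs => key_integrable hμpos hR hF hFH hs
  have hre : ∀ (z : ℂ) (x : ℝ), (-(z * (x:ℂ))).re = -z.re * x := by
    intro z x
    simp [Complex.mul_re]
  have part1 : ∀ z : ℂ, z.re ∈ Set.Ioo (-R) 0 →
      Integrable (fun x : ℝ => Complex.exp (-(z * x))) μ := by
    intro z hz
    refine Integrable.mono' (key (-z.re) ⟨by linarith [hz.2], by linarith [hz.1]⟩)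
      (Continuous.aestronglyMeasurable (by fun_prop))
      (Filter.Eventually.of_forall fun x => ?_)
    rw [Complex.norm_exp, hre]
  have hGint : ∀ z : ℂ, ‖z‖ < R →
      Integrable (fun x : ℝ => Complex.exp (-(z * x))) μ := by
    intro z hz
    have habs : (0:ℝ) ≤ ‖z‖ := norm_nonneg z
    refine Integrable.mono' (key ((‖z‖ + R)/2)
      ⟨by linarith, by linarith⟩)
      (Continuous.aestronglyMeasurable (by fun_prop)) ?_
    filter_upwards [hμpos] with x hx
    rw [Complex.norm_exp, hre]
    apply Real.exp_le_exp.2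
    have h1 : -z.re ≤ ‖z‖ := by
      have h2 := Complex.abs_re_le_norm z
      have := neg_abs_le z.re
      linarith
    apply mul_le_mul_of_nonneg_right _ hx.le
    linarith
  have hGdiff : DifferentiableOn ℂ H (Metric.ball (0:ℂ) R) := by
    intro z₀ hz₀
    apply DifferentiableAt.differentiableWithinAt
    rw [Metric.mem_ball, Complex.dist_eq, sub_zero] at hz₀
    set ε : ℝ := (R - ‖z₀‖)/4 with hεdef
    have habs : (0:ℝ) ≤ ‖z₀‖ := norm_nonneg z₀
    have hε0 : 0 < ε := by rw [hεdef]; linarith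
    set s' : ℝ := (‖z₀‖ + R)/2 with hs'def
    have hs' : s' ∈ Set.Ioo 0 R := ⟨by rw [hs'def]; linarith, by rw [hs'def]; linarith⟩
    have hkey := hasDerivAt_integral_of_dominated_loc_of_deriv_le (μ := μ) (x₀ := z₀)
      (F := fun (z : ℂ) (x : ℝ) => Complex.exp (-(z * x)))
      (F' := fun (z : ℂ) (x : ℝ) => -((x:ℂ) * Complex.exp (-(z * x))))
      (bound := fun x : ℝ => (1/ε) * Real.exp (s' * x)) (Metric.ball_mem_nhds z₀ hε0)
      (Filter.Eventually.of_forall fun z =>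
        Continuous.aestronglyMeasurable (by fun_prop))
      (hGint z₀ hz₀)
      (Continuous.aestronglyMeasurable (by fun_prop)) ?_
      ((key s' hs').const_mul _) ?_
    · exact hkey.2.differentiableAt
    · filter_upwards [hμpos] with x hx z hz
      rw [norm_neg, norm_mul, Complex.norm_real, Real.norm_eq_abs,
        _root_.abs_of_pos hx, Complex.norm_exp, hre]
      have hzabs : ‖z‖ ≤ ‖z₀‖ + ε := by
        have h3 : ‖z - z₀‖ < ε := by
          rw [← Complex.dist_eq]; exact hz
        calc ‖z‖ = ‖z₀ + (z - z₀)‖ := by ring_nf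
          _ ≤ ‖z₀‖ + ‖z - z₀‖ := norm_add_le _ _
          _ ≤ _ := by linarith
      have hzre : -z.re ≤ ‖z₀‖ + ε := by
        have h2 := Complex.abs_re_le_norm z
        have h5 := neg_abs_le z.re
        linarith
      have hx1 : x ≤ (1/ε) * Real.exp (ε * x) := by
        have h5 := aux_bound (n := 1) hε0 hx.le
        rw [pow_one, pow_one, Nat.factorial_one, Nat.cast_one] at h5
        calc x = (x * Real.exp (-(ε * x))) * Real.exp (ε * x) := by
              rw [mul_assoc, ← Real.exp_add]; simp
          _ ≤ (1/ε) * Real.exp (ε * x) :=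
              mul_le_mul_of_nonneg_right h5 (Real.exp_pos _).le
      calc x * Real.exp (-z.re * x)
          ≤ ((1/ε) * Real.exp (ε * x)) * Real.exp ((‖z₀‖ + ε) * x) := by
            refine mul_le_mul hx1 (Real.exp_le_exp.2 ?_) (Real.exp_pos _).le ?_
            · exact mul_le_mul_of_nonneg_right hzre hx.le
            · positivity
        _ = (1/ε) * Real.exp (s' * x) := by
            rw [mul_assoc, ← Real.exp_add]
            congr 2
            rw [hs'def, hεdef]; ring
    · filter_upwards with x z hz
      have h1 : HasDerivAt (fun z : ℂ => -(z * x)) (-(x:ℂ)) z := by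
        simpa using ((hasDerivAt_id z).mul_const ((x:ℂ))).fun_neg
      have h2 := h1.cexp
      exact h2.congr_deriv (by ring)
  have hGan : AnalyticOnNhd ℂ H (Metric.ball 0 R) := hGdiff.analyticOnNhd Metric.isOpen_ball
  have hFG : Set.EqOn H F (Metric.ball (0:ℂ) R) :=
    AnalyticOnNhd.eqOn_of_preconnected_of_frequently_eq hGan hFan
      (convex_ball (0:ℂ) R).isPreconnected hballmem
      (freq hR fun t ht => (hext t ht.1.le ht.2).symm)
  exact ⟨part1, fun z hz => hFG hz⟩
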